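/- Consider ASP with a = (2ℓ-p)/ℓ applied to y = Mx + e with x ℓ-cosparse. If the ACoSaMP per-iteration bound ‖x - Q_{Λ̂^t}w‖₂ ≤ ρ₁ρ₂‖x - x̂^{t-1}_{ASP}‖₂ + (η₁ + ρ₁η₂)‖e‖₂ holds, then the ASP estimate x̂^t_{ASP} = argmin ‖y - Mx̃‖₂² s.t. Ω_{Λ̂^t}x̃ = 0 satisfies ‖x - x̂^t_{ASP}‖₂ ≤ ((1+δ_{2ℓ-p})/(1-δ_{2ℓ-p}))ρ₁ρ₂‖x - x̂^{t-1}_{ASP}‖₂ + ((1+δ_{2ℓ-p})/(1-δ_{2ℓ-p})(η₁ + ρ₁η₂) + 2/(1-δ_{2ℓ-p}))‖e‖₂. -/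

import Mathlib

set_option maxHeartbeats 1000000


noncomputable section

abbrev Evec (d : ℕ) := EuclideanSpace ℝ (Fin d)

def nullSp {d p : ℕ} (Om : Evec d →L[ℝ] Evec p) (Λ : Finset (Fin p)) : Submodule ℝ (Evec d) where
  carrier := {x | ∀ i ∈ Λ, Om x i = 0}
  zero_mem' := by intro i _; simp
  add_mem' := by intro a b ha hb i hi; simp [ha i hi, hb i hi]
  smul_mem' := by intro c a ha i hi; simp [ha i hi]

def Qp {d p : ℕ} (Om : Evec d →L[ℝ] Evec p) (Λ : Finset (Fin p)) : Evec d →L[ℝ] Evec d :=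
  (nullSp Om Λ).subtypeL ∘L Submodule.orthogonalProjection (nullSp Om Λ)

def Cosparse {d p : ℕ} (Om : Evec d →L[ℝ] Evec p) (ℓ : ℕ) (v : Evec d) : Prop :=
  ℓ ≤ {i : Fin p | Om v i = 0}.ncard

def ORIP {d m p : ℕ} (M : Evec d →L[ℝ] Evec m) (Om : Evec d →L[ℝ] Evec p) (ℓ : ℕ) (δ : ℝ) : Prop :=
  ∀ v : Evec d, Cosparse Om ℓ v →
    (1 - δ) * ‖v‖ ^ 2 ≤ ‖M v‖ ^ 2 ∧ ‖M v‖ ^ 2 ≤ (1 + δ) * ‖v‖ ^ 2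

lemma cosparse_sub_of_null {d p ℓ : ℕ} (Om : Evec d →L[ℝ] Evec p) (Λh : Finset (Fin p))
    (v1 v2 : Evec d) (hx : Cosparse Om ℓ v1) (hΛcard : ℓ ≤ Λh.card)
    (hv2 : v2 ∈ nullSp Om Λh) : Cosparse Om (2 * ℓ - p) (v1 - v2) := by
  set A : Set (Fin p) := {i | Om v1 i = 0} with hA
  set B : Set (Fin p) := ↑Λh with hB
  have hsub : A ∩ B ⊆ {i : Fin p | Om (v1 - v2) i = 0} := by
    rintro i ⟨hiA, hiB⟩
    have h2 : Om v2 i = 0 := hv2 i hiB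
    have h1 : Om v1 i = 0 := hiA
    simp only [Set.mem_setOf_eq, map_sub]
    show Om v1 i - Om v2 i = 0
    rw [h1, h2, sub_zero]
  have hunion : (A ∪ B).ncard + (A ∩ B).ncard = A.ncard + B.ncard :=
    Set.ncard_union_add_ncard_inter A B
  have hup : (A ∪ B).ncard ≤ p := by
    have := Set.ncard_le_ncard (Set.subset_univ (A ∪ B)) (Set.finite_univ)
    simpa [Set.ncard_univ] using this
  have hBcard : ℓ ≤ B.ncard := by
    rw [hB, Set.ncard_coe_finset]; exact hΛcard
  have hAcard : ℓ ≤ A.ncard := hx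
  have hinter : 2 * ℓ - p ≤ (A ∩ B).ncard := by omega
  exact le_trans hinter (Set.ncard_le_ncard hsub (Set.toFinite _))

/-- ASP iteration bound (Theorem 6.9): given the ACoSaMP per-iteration bound for the
intermediate estimate Q_{Λ̂ᵗ}w, the objective-aware ASP estimate satisfies a similar
bound with constants inflated by (1+δ_{2ℓ-p})/(1-δ_{2ℓ-p}). -/
theorem stmt13 {d m p ℓ : ℕ} (M : Evec d →L[ℝ] Evec m) (Om : Evec d →L[ℝ] Evec p)
    (x xprev w xt : Evec d) (e y : Evec m) (Λh : Finset (Fin p))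
    (δ ρ₁ ρ₂ η₁ η₂ : ℝ)
    (hy : y = M x + e)
    (hx : Cosparse Om ℓ x)
    (hΛcard : ℓ ≤ Λh.card)
    (hbound : ‖x - Qp Om Λh w‖ ≤ ρ₁ * ρ₂ * ‖x - xprev‖ + (η₁ + ρ₁ * η₂) * ‖e‖)
    (hxt1 : xt ∈ nullSp Om Λh)
    (hxt2 : ∀ v ∈ nullSp Om Λh, ‖y - M xt‖ ≤ ‖y - M v‖)
    (hrip : ORIP M Om (2 * ℓ - p) δ)
    (hδ0 : 0 ≤ δ) (hδ1 : δ < 1) :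
    ‖x - xt‖ ≤ ((1 + δ) / (1 - δ)) * (ρ₁ * ρ₂) * ‖x - xprev‖
      + (((1 + δ) / (1 - δ)) * (η₁ + ρ₁ * η₂) + 2 / (1 - δ)) * ‖e‖ := by
  have hc : (0:ℝ) < 1 - δ := by linarith
  set q : Evec d := Qp Om Λh w with hq
  have hqmem : q ∈ nullSp Om Λh := by
    rw [hq]
    simp only [Qp, ContinuousLinearMap.comp_apply, Submodule.subtypeL_apply]
    exact Submodule.coe_mem _
  -- cosparsity of both differences
  have hcs1 : Cosparse Om (2 * ℓ - p) (x - xt) :=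
    cosparse_sub_of_null Om Λh x xt hx hΛcard hxt1
  have hcs2 : Cosparse Om (2 * ℓ - p) (x - q) :=
    cosparse_sub_of_null Om Λh x q hx hΛcard hqmem
  obtain ⟨hr1, _⟩ := hrip _ hcs1
  obtain ⟨_, hr2⟩ := hrip _ hcs2
  -- residual chain
  have h3 : ‖M (x - xt)‖ ≤ ‖M (x - q)‖ + 2 * ‖e‖ := by
    have e1 : M (x - xt) = (y - M xt) - e := by rw [hy, map_sub]; abel
    have e2 : y - M q = M (x - q) + e := by rw [hy, map_sub]; abel
    calc ‖M (x - xt)‖ = ‖(y - M xt) - e‖ := by rw [e1]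
      _ ≤ ‖y - M xt‖ + ‖e‖ := norm_sub_le _ _
      _ ≤ ‖y - M q‖ + ‖e‖ := by linarith [hxt2 q hqmem]
      _ = ‖M (x - q) + e‖ + ‖e‖ := by rw [e2]
      _ ≤ (‖M (x - q)‖ + ‖e‖) + ‖e‖ := by linarith [norm_add_le (M (x - q)) e]
      _ = ‖M (x - q)‖ + 2 * ‖e‖ := by ring
  -- sqrt bounds
  set s1 := Real.sqrt (1 - δ) with hs1
  set s2 := Real.sqrt (1 + δ) with hs2
  have hs1sq : s1 ^ 2 = 1 - δ := Real.sq_sqrt hc.le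
  have hs2sq : s2 ^ 2 = 1 + δ := Real.sq_sqrt (by linarith)
  have hs1pos : 0 < s1 := Real.sqrt_pos.mpr hc
  have hs2nn : 0 ≤ s2 := Real.sqrt_nonneg _
  have hb1 : s1 * ‖x - xt‖ ≤ ‖M (x - xt)‖ := by
    have h := Real.sqrt_le_sqrt hr1
    rwa [Real.sqrt_mul hc.le, Real.sqrt_sq (norm_nonneg _), Real.sqrt_sq (norm_nonneg _)] at h
  have hb2 : ‖M (x - q)‖ ≤ s2 * ‖x - q‖ := by
    have h := Real.sqrt_le_sqrt hr2
    rwa [Real.sqrt_mul (by linarith : (0:ℝ) ≤ 1 + δ), Real.sqrt_sq (norm_nonneg _),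
      Real.sqrt_sq (norm_nonneg _)] at h
  -- s1 ≤ 1 and s1 * s2 ≤ 1 + δ
  have hs1le : s1 ≤ 1 := by nlinarith
  have hs12 : s1 * s2 ≤ 1 + δ := by nlinarith [mul_nonneg hs1pos.le hs2nn]
  -- key inequality
  have key : (1 - δ) * ‖x - xt‖ ≤ (1 + δ) * ‖x - q‖ + 2 * ‖e‖ := by
    have h4 : s1 * ‖x - xt‖ ≤ s2 * ‖x - q‖ + 2 * ‖e‖ := by linarith
    have h5 : s1 * (s1 * ‖x - xt‖) ≤ s1 * (s2 * ‖x - q‖ + 2 * ‖e‖) :=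
      mul_le_mul_of_nonneg_left h4 hs1pos.le
    have e3 : s1 * (s1 * ‖x - xt‖) = (1 - δ) * ‖x - xt‖ := by rw [← hs1sq]; ring
    have e4 : s1 * (s2 * ‖x - q‖ + 2 * ‖e‖) = (s1 * s2) * ‖x - q‖ + 2 * s1 * ‖e‖ := by ring
    have h8 : (s1 * s2) * ‖x - q‖ ≤ (1 + δ) * ‖x - q‖ :=
      mul_le_mul_of_nonneg_right hs12 (norm_nonneg _)
    have h9 : 2 * s1 * ‖e‖ ≤ 2 * ‖e‖ :=
      mul_le_mul_of_nonneg_right (by linarith) (norm_nonneg _)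
    rw [e3, e4] at h5
    linarith
  have final : (1 - δ) * ‖x - xt‖ ≤
      (1 + δ) * (ρ₁ * ρ₂) * ‖x - xprev‖ + ((1 + δ) * (η₁ + ρ₁ * η₂) + 2) * ‖e‖ := by
    have h6 : (1 + δ) * ‖x - q‖ ≤ (1 + δ) * (ρ₁ * ρ₂ * ‖x - xprev‖ + (η₁ + ρ₁ * η₂) * ‖e‖) :=
      mul_le_mul_of_nonneg_left hbound (by linarith)
    have h7 : (1 + δ) * (ρ₁ * ρ₂ * ‖x - xprev‖ + (η₁ + ρ₁ * η₂) * ‖e‖)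
        = (1 + δ) * (ρ₁ * ρ₂) * ‖x - xprev‖ + (1 + δ) * (η₁ + ρ₁ * η₂) * ‖e‖ := by ring
    rw [h7] at h6
    linarith
  rw [show ((1 + δ) / (1 - δ)) * (ρ₁ * ρ₂) * ‖x - xprev‖
      + (((1 + δ) / (1 - δ)) * (η₁ + ρ₁ * η₂) + 2 / (1 - δ)) * ‖e‖
      = ((1 + δ) * (ρ₁ * ρ₂) * ‖x - xprev‖ + ((1 + δ) * (η₁ + ρ₁ * η₂) + 2) * ‖e‖) / (1 - δ)
      from by field_simp]
  rw [le_div_iff₀ hc]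
  linarith
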